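/- Let 𝒜 = (Q, A, τ) be a Mealy automaton with A finite and S the semigroup it generates. Let v₁, v₂ ∈ A* and suppose there exists a bijection φ : S·v₁ → S·v₂ such that φ(v₁) = v₂ and ψ_{v₁}^φ = ψ_{v₂}. Then for every ξ ∈ A^ω, the orbits S·(v₁⌢ξ) and S·(v₂⌢ξ) have the same cardinality. -/

import Mathlib

/-!
Framework for Mealy automata `𝒜 = (Q, A, τ)` with `τ q a = (q·a, q@a)`.

* `Mealy.act τ q` is the endomorphism of the free monoid `A*` (modelled as `List A`)
  induced by the state `q`, defined by `q·(a⌢u) = (q·a)⌢((q@a)·u)`.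
* `Mealy.Sgp τ` is the semigroup (with identity adjoined, i.e. the submonoid) of
  `End(A*)` generated by the states.
* `Mealy.extω f ξ` is the extension of a length- and prefix-preserving endomorphism
  `f` of `A*` to right-infinite words `ξ : ℕ → A`: its `n`-th letter is the `n`-th
  letter of the image of the length-`(n+1)` prefix of `ξ`.
* `Mealy.catω v ξ` is the concatenation `v⌢ξ` of a finite word with an infinite word.
* `Mealy.orbit τ u` and `Mealy.orbitω τ ξ` are the orbits `S·u` and `S·ξ`.
* `Mealy.mval τ v` is `m_v = sup_{ξ ∈ A^ω} |S·(v⌢ξ)| ∈ ℕ∞`.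
* `Mealy.sect f w` is the section `f@w`, characterized for `f ∈ S` by
  `f·(w⌢u) = (f·w)⌢((f@w)·u)`.
-/

namespace Mealy

variable {Q A : Type*}

/-- The action of a state on a finite word: `q·(a⌢u) = (q·a)⌢((q@a)·u)`. -/
def act (τ : Q → A → A × Q) : Q → List A → List A
  | _, [] => []
  | q, a :: u => (τ q a).1 :: act τ (τ q a).2 u

/-- The semigroup `S ≤ End(A*)` generated by the states of the automaton
(as a submonoid of `Function.End (List A)`, where multiplication is composition). -/
def Sgp (τ : Q → A → A × Q) : Submonoid (Function.End (List A)) :=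
  Submonoid.closure { f : Function.End (List A) | ∃ q : Q, f = act τ q }

/-- Extension of a (length- and prefix-preserving) endomorphism of `A*` to `A^ω`:
the `n`-th letter of `f·ξ` is the `n`-th letter of the image of the prefix of `ξ`
of length `n+1`. -/
def extω (f : Function.End (List A)) (ξ : ℕ → A) : ℕ → A :=
  fun n => (f ((List.range (n + 1)).map ξ)).getD n (ξ n)

/-- Concatenation `v⌢ξ` of a finite word with a right-infinite word. -/
def catω (v : List A) (ξ : ℕ → A) : ℕ → A :=
  fun n => v.getD n (ξ (n - v.length))

/-- The orbit `S·u` of a finite word. -/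
def orbit (τ : Q → A → A × Q) (u : List A) : Set (List A) :=
  (fun f : Function.End (List A) => f u) '' (Sgp τ : Set (Function.End (List A)))

/-- The orbit `S·ξ` of a right-infinite word. -/
def orbitω (τ : Q → A → A × Q) (ξ : ℕ → A) : Set (ℕ → A) :=
  (fun f : Function.End (List A) => extω f ξ) '' (Sgp τ : Set (Function.End (List A)))

/-- `m_v = sup_{ξ ∈ A^ω} |S·(v⌢ξ)| ∈ ℕ ∪ {∞}`. -/
noncomputable def mval (τ : Q → A → A × Q) (v : List A) : ℕ∞ :=
  ⨆ ξ : ℕ → A, (orbitω τ (catω v ξ)).encard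

/-- The section `f@w` of an endomorphism of `A*` at the word `w`. -/
def sect (f : Function.End (List A)) (w : List A) : Function.End (List A) :=
  fun u => (f (w ++ u)).drop w.length

end Mealy

namespace Mealy

variable {Q A : Type*}

/-- The state reached after reading a word. -/
def run (τ : Q → A → A × Q) : Q → List A → Q
  | q, [] => q
  | q, a :: u => run τ (τ q a).2 u

lemma act_length (τ : Q → A → A × Q) (q : Q) (u : List A) :
    (act τ q u).length = u.length := by
  induction u generalizing q with
  | nil => rfl
  | cons a u ih => simp [act, ih]

lemma act_append (τ : Q → A → A × Q) (q : Q) (u w : List A) :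
    act τ q (u ++ w) = act τ q u ++ act τ (run τ q u) w := by
  induction u generalizing q with
  | nil => rfl
  | cons a u ih => simp [act, run, ih]

lemma sgp_good (τ : Q → A → A × Q) :
    ∀ f ∈ Sgp τ, (∀ u, (f u).length = u.length) ∧
      (∀ u w, f (u ++ w) = f u ++ sect f u w) := by
  intro f hf
  induction hf using Submonoid.closure_induction with
  | mem f hf =>
    obtain ⟨q, rfl⟩ := hf
    refine ⟨act_length τ q, fun u w => ?_⟩
    rw [act_append]
    congr 1
    simp [sect, act_append, act_length]
  | one =>
    refine ⟨fun u => rfl, fun u w => ?_⟩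
    show u ++ w = u ++ (u ++ w).drop u.length
    simp
  | mul f g hf hg ihf ihg =>
    have hmul : ∀ x, (f * g) x = f (g x) := fun _ => rfl
    refine ⟨fun u => by rw [hmul, ihf.1, ihg.1], fun u w => ?_⟩
    have h1 : (f * g) (u ++ w) = f (g u) ++ sect f (g u) (sect g u w) := by
      rw [hmul, ihg.2, ihf.2]
    rw [h1, hmul]
    congr 1
    simp only [sect, h1]
    rw [List.drop_left' (by rw [ihf.1, ihg.1])]

lemma range_map_catω (v : List A) (ξ : ℕ → A) (m : ℕ) :
    (List.range m).map (catω v ξ) = v.take m ++ (List.range (m - v.length)).map ξ := by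
  induction m with
  | zero => simp
  | succ m ih =>
    rw [List.range_succ, List.map_append, ih, List.map_singleton]
    rcases lt_or_ge m v.length with h | h
    · have h1 : m + 1 - v.length = 0 := by omega
      have h2 : m - v.length = 0 := by omega
      rw [h1, h2]
      simp only [List.range_zero, List.map_nil, List.append_nil]
      have : catω v ξ m = v[m] := by
        simp [catω, List.getD_eq_getElem?_getD, List.getElem?_eq_getElem h]
      rw [this, ← List.take_concat_get h, List.concat_eq_append]
    · have h1 : v.take m = v := List.take_of_length_le h
      have h2 : v.take (m+1) = v := List.take_of_length_le (by omega)
      have h3 : m + 1 - v.length = (m - v.length) + 1 := by omega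
      have h4 : catω v ξ m = ξ (m - v.length) := by
        simp [catω, List.getD_eq_getElem?_getD, List.getElem?_eq_none h]
      rw [h1, h2, h3, h4, List.range_succ, List.map_append, List.map_singleton,
        List.append_assoc]

lemma catω_inj {u u' : List A} (h : u.length = u'.length) {ξ ξ' : ℕ → A}
    (heq : catω u ξ = catω u' ξ') : u = u' ∧ ξ = ξ' := by
  constructor
  · refine List.ext_getElem h fun i hi hi' => ?_
    have := congrFun heq i
    simpa [catω, List.getD_eq_getElem?_getD, List.getElem?_eq_getElem, hi, hi'] using this
  · funext n
    have := congrFun heq (n + u.length)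
    have h1 : u.length ≤ n + u.length := by omega
    have h2 : u'.length ≤ n + u.length := by omega
    simpa [catω, List.getD_eq_getElem?_getD, List.getElem?_eq_none, h1, h2, ← h] using this

lemma extω_cat (f : Function.End (List A)) (hlen : ∀ u : List A, (f u).length = u.length)
    (happ : ∀ u w : List A, f (u ++ w) = f u ++ sect f u w) (v : List A) (ξ : ℕ → A) :
    extω f (catω v ξ) = catω (f v) (extω (sect f v) ξ) := by
  funext n
  have hfv : (f v).length = v.length := hlen v
  simp only [extω, catω, range_map_catω]
  rcases lt_or_ge n v.length with h | h
  · have h1 : n + 1 - v.length = 0 := by omega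
    rw [h1]
    simp only [List.range_zero, List.map_nil, List.append_nil]
    have h2 : f (v.take (n+1)) = (f v).take (n+1) := by
      have := happ (v.take (n+1)) (v.drop (n+1))
      rw [List.take_append_drop] at this
      rw [this, List.take_left' (by rw [hlen, List.length_take]; omega)]
    rw [h2]
    have hn1 : n < ((f v).take (n+1)).length := by
      rw [List.length_take]; omega
    rw [List.getD_eq_getElem _ _ hn1, List.getD_eq_getElem _ _ (by omega : n < (f v).length),
      List.getElem_take]
  · have h1 : v.take (n+1) = v := List.take_of_length_le (by omega)
    rw [h1, happ]
    set M := (List.range (n + 1 - v.length)).map ξ with hM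
    have hMlen : M.length = n + 1 - v.length := by simp [hM]
    have hXlen : (sect f v M).length = n + 1 - v.length := by
      simp only [sect]
      rw [List.length_drop, hlen, List.length_append]
      omega
    have htot : n < (f v ++ sect f v M).length := by
      rw [List.length_append, hfv, hXlen]; omega
    rw [List.getD_eq_getElem _ _ htot,
      List.getElem_append_right (by omega : (f v).length ≤ n)]
    rw [List.getD_eq_default _ _ (by omega : (f v).length ≤ n)]
    have h3 : n - v.length + 1 = n + 1 - v.length := by omega
    simp only [hfv, h3, ← hM]
    rw [List.getD_eq_getElem _ _ (by omega : n - v.length < (sect f v M).length)]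

end Mealy

namespace Mealy

/-- if there is a bijection `φ : S·v₁ → S·v₂` with `φ(v₁) = v₂` and
`ψ_{v₁}^φ = ψ_{v₂}` (expressed componentwise: `φ` intertwines the restricted actions,
i.e. `φ(s·w) = s·(φ w)`, and the sections agree, i.e. `s@w = s@(φ w)`), then for every
`ξ ∈ A^ω` the orbits `S·(v₁⌢ξ)` and `S·(v₂⌢ξ)` have the same cardinality. -/
theorem orbit_cat_cardinal_eq_of_equiv {Q A : Type*} [Finite A] (τ : Q → A → A × Q)
    (v₁ v₂ : List A) (φ : ↥(orbit τ v₁) ≃ ↥(orbit τ v₂))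
    (hv₁ : v₁ ∈ orbit τ v₁) (hφv : (φ ⟨v₁, hv₁⟩ : List A) = v₂)
    (hπ : ∀ f ∈ Sgp τ, ∀ (w : ↥(orbit τ v₁)) (h : f (w : List A) ∈ orbit τ v₁),
      ((φ ⟨f (w : List A), h⟩ : List A)) = f ((φ w : List A)))
    (hsect : ∀ f ∈ Sgp τ, ∀ w : ↥(orbit τ v₁),
      sect f (w : List A) = sect f ((φ w : List A))) :
    ∀ ξ : ℕ → A,
      Cardinal.mk ↥(orbitω τ (catω v₁ ξ)) = Cardinal.mk ↥(orbitω τ (catω v₂ ξ)) := by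
  intro ξ
  -- value of f v₂ through φ
  have hmem₁ : ∀ f ∈ Sgp τ, f v₁ ∈ orbit τ v₁ := fun f hf => ⟨f, hf, rfl⟩
  have hfv2 : ∀ f (hf : f ∈ Sgp τ), f v₂ = (φ ⟨f v₁, hmem₁ f hf⟩ : List A) := by
    intro f hf
    have := hπ f hf ⟨v₁, hv₁⟩ (hmem₁ f hf)
    rw [hφv] at this
    exact this.symm
  have hsect12 : ∀ f ∈ Sgp τ, sect f v₁ = sect f v₂ := by
    intro f hf
    have := hsect f hf ⟨v₁, hv₁⟩
    rwa [hφv] at this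
  -- key equivalence
  have key : ∀ f ∈ Sgp τ, ∀ g ∈ Sgp τ,
      (extω f (catω v₁ ξ) = extω g (catω v₁ ξ) ↔
       extω f (catω v₂ ξ) = extω g (catω v₂ ξ)) := by
    intro f hf g hg
    obtain ⟨hflen, hfapp⟩ := sgp_good τ f hf
    obtain ⟨hglen, hgapp⟩ := sgp_good τ g hg
    rw [extω_cat f hflen hfapp, extω_cat g hglen hgapp,
      extω_cat f hflen hfapp, extω_cat g hglen hgapp]
    constructor
    · intro h
      obtain ⟨h1, h2⟩ := catω_inj (by rw [hflen, hglen]) h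
      have hv2eq : f v₂ = g v₂ := by
        rw [hfv2 f hf, hfv2 g hg]
        congr 2
        exact Subtype.ext h1
      rw [hv2eq, ← hsect12 f hf, ← hsect12 g hg, h2]
    · intro h
      obtain ⟨h1, h2⟩ := catω_inj (by rw [hflen, hglen]) h
      have hv1eq : f v₁ = g v₁ := by
        have : (⟨f v₁, hmem₁ f hf⟩ : ↥(orbit τ v₁)) = ⟨g v₁, hmem₁ g hg⟩ := by
          apply φ.injective
          apply Subtype.ext
          rw [← hfv2 f hf, ← hfv2 g hg, h1]
        exact congrArg Subtype.val this
      rw [hv1eq, hsect12 f hf, hsect12 g hg, h2]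
  -- build the bijection
  have hchoice : ∀ x : ↥(orbitω τ (catω v₁ ξ)), ∃ f, f ∈ Sgp τ ∧
      extω f (catω v₁ ξ) = (x : ℕ → A) := fun x => by
    obtain ⟨f, hf, hfeq⟩ := x.2
    exact ⟨f, hf, hfeq⟩
  choose c hc1 hc2 using hchoice
  let F : ↥(orbitω τ (catω v₁ ξ)) → ↥(orbitω τ (catω v₂ ξ)) :=
    fun x => ⟨extω (c x) (catω v₂ ξ), ⟨c x, hc1 x, rfl⟩⟩
  have hFinj : Function.Injective F := by
    intro x y hxy
    have h2 : extω (c x) (catω v₂ ξ) = extω (c y) (catω v₂ ξ) :=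
      congrArg Subtype.val hxy
    have h1 := (key (c x) (hc1 x) (c y) (hc1 y)).mpr h2
    apply Subtype.ext
    rw [← hc2 x, ← hc2 y, h1]
  have hFsurj : Function.Surjective F := by
    rintro ⟨y, g, hg, rfl⟩
    refine ⟨⟨extω g (catω v₁ ξ), ⟨g, hg, rfl⟩⟩, ?_⟩
    apply Subtype.ext
    show extω (c _) (catω v₂ ξ) = extω g (catω v₂ ξ)
    exact (key (c _) (hc1 _) g hg).mp (hc2 _)
  exact Cardinal.mk_congr (Equiv.ofBijective F ⟨hFinj, hFsurj⟩)


end Mealy
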